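/- Let D and D' be d-regular graphs on the same number of vertices, and let G_D, G_{D'} be obtained from them by the gadget construction: replace each vertex v_i by a copy R_i of a fixed gadget graph R having exactly d vertices of degree d−1 (forming a set X_i) and all other vertices of degree d, and for each edge v_i v_j of D add an edge between X_i and X_j so that the new edges form a perfect matching on the union of the X_i. Suppose every subgraph of G_D isomorphic to R is one of R₁,…,R_m, and similarly for G_{D'}. If G_D ≅ G_{D'} then D ≅ D'. -/

import Mathlib

/-- Gadget reconstruction: let `D, D'` be `d`-regular graphs on `m` vertices,
and let `G, G'` be obtained from them by the gadget construction with a fixed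
gadget graph `R` having exactly `d` vertices of degree `d-1` and all other
vertices of degree `d`: each vertex `i` is replaced by a copy of `R` (the part
`part⁻¹ {i}` induces a copy of `R`), cross edges between distinct parts form a
matching (each vertex has at most one cross neighbour) and distinct parts
`i, j` are joined by a cross edge exactly when `i, j` are adjacent in `D`.
Suppose moreover that every subgraph of `G` (resp. `G'`) isomorphic to `R` is
one of the gadget copies. If `G ≅ G'` then `D ≅ D'`. -/
theorem gadget_reconstruction {β W W' : Type*} [Fintype β] [Fintype W] [Fintype W']
    (d m : ℕ) (R : SimpleGraph β)
    (hRX : {v : β | (R.neighborSet v).ncard = d - 1}.ncard = d)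
    (hRdeg : ∀ v : β, (R.neighborSet v).ncard = d - 1 ∨ (R.neighborSet v).ncard = d)
    (D D' : SimpleGraph (Fin m))
    (hDreg : ∀ i, (D.neighborSet i).ncard = d)
    (hD'reg : ∀ i, (D'.neighborSet i).ncard = d)
    (G : SimpleGraph W) (G' : SimpleGraph W')
    (hGreg : ∀ u : W, (G.neighborSet u).ncard = d)
    (hG'reg : ∀ u : W', (G'.neighborSet u).ncard = d)
    (part : W → Fin m) (part' : W' → Fin m)
    (hcopy : ∀ i, Nonempty (R ≃g G.induce {w | part w = i}))
    (hcopy' : ∀ i, Nonempty (R ≃g G'.induce {w | part' w = i}))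
    (hcross : ∀ i j, i ≠ j →
      (D.Adj i j ↔ ∃ u v, part u = i ∧ part v = j ∧ G.Adj u v))
    (hcross' : ∀ i j, i ≠ j →
      (D'.Adj i j ↔ ∃ u v, part' u = i ∧ part' v = j ∧ G'.Adj u v))
    (hmatch : ∀ u : W, ({v | G.Adj u v ∧ part v ≠ part u}).ncard ≤ 1)
    (hmatch' : ∀ u : W', ({v | G'.Adj u v ∧ part' v ≠ part' u}).ncard ≤ 1)
    (hsubR : ∀ H : G.Subgraph, Nonempty (R ≃g H.coe) → ∃ i, H.verts = {w | part w = i})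
    (hsubR' : ∀ H : G'.Subgraph, Nonempty (R ≃g H.coe) → ∃ i, H.verts = {w | part' w = i}) :
    Nonempty (G ≃g G') → Nonempty (D ≃g D') := by

  rintro ⟨φ⟩
  by_cases hβ : Nonempty β
  · -- every part is nonempty
    have hne : ∀ i : Fin m, ∃ w : W, part w = i := by
      intro i
      obtain ⟨e⟩ := hcopy i
      obtain ⟨b⟩ := hβ
      exact ⟨(e b : W), (e b).2⟩
    -- image of each part is a part of `G'`
    have key : ∀ i : Fin m, ∃ k : Fin m,
        (φ '' {w | part w = i}) = {w | part' w = k} := by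
      intro i
      set S : Set W := {w | part w = i} with hS
      obtain ⟨e⟩ := hcopy i
      have hiso : Nonempty (R ≃g G'.induce (φ '' S)) := by
        refine ⟨e.trans ⟨Equiv.Set.image φ S φ.toEquiv.injective, ?_⟩⟩
        intro a b
        simp only [Equiv.Set.image_apply, SimpleGraph.comap_adj, Function.Embedding.coe_subtype]
        exact φ.map_rel_iff
      obtain ⟨hiso⟩ := hiso
      have hsub : Nonempty (R ≃g ((⊤ : G'.Subgraph).induce (φ '' S)).coe) := by
        refine ⟨hiso.trans ⟨Equiv.refl _, ?_⟩⟩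
        rintro ⟨a, ha⟩ ⟨b, hb⟩
        simp [SimpleGraph.Subgraph.induce_adj, ha, hb]
        exact ⟨fun h => h.2.2, fun h => ⟨ha, hb, h⟩⟩
      obtain ⟨k, hk⟩ := hsubR' _ hsub
      exact ⟨k, hk⟩
    choose σ hσ using key
    have hinj : Function.Injective σ := by
      intro i j hij
      obtain ⟨u, hu⟩ := hne i
      have h1 : φ u ∈ φ '' {w | part w = i} := ⟨u, hu, rfl⟩
      rw [hσ i, hij, ← hσ j] at h1
      obtain ⟨v, hv, hvu⟩ := h1
      have : v = u := φ.toEquiv.injective hvu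
      rw [← hu, ← hv, this]
    have hbij : Function.Bijective σ := (Finite.injective_iff_bijective).mp hinj
    let e : Fin m ≃ Fin m := Equiv.ofBijective σ hbij
    have hmem : ∀ (w : W) (i : Fin m), part w = i → part' (φ w) = σ i := by
      intro w i hw
      have : φ w ∈ φ '' {w | part w = i} := ⟨w, hw, rfl⟩
      rw [hσ i] at this
      exact this
    refine ⟨⟨e, ?_⟩⟩
    intro a b
    show D'.Adj (σ a) (σ b) ↔ D.Adj a b
    by_cases hab : a = b
    · subst hab; simp
    · have hσab : σ a ≠ σ b := fun h => hab (hinj h)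
      rw [hcross a b hab, hcross' _ _ hσab]
      constructor
      · rintro ⟨u', v', hu', hv', huv⟩
        have hu : u' ∈ {w | part' w = σ a} := hu'
        rw [← hσ a] at hu
        obtain ⟨u, hu, rfl⟩ := hu
        have hv : v' ∈ {w | part' w = σ b} := hv'
        rw [← hσ b] at hv
        obtain ⟨v, hv, rfl⟩ := hv
        exact ⟨u, v, hu, hv, φ.map_rel_iff.mp huv⟩
      · rintro ⟨u, v, hu, hv, huv⟩
        exact ⟨φ u, φ v, hmem u a hu, hmem v b hv, φ.map_rel_iff.mpr huv⟩
  · -- degenerate case: `β` is empty, so all parts are empty and `W, W'` are empty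
    have hW : IsEmpty W := by
      by_contra h
      rw [not_isEmpty_iff] at h
      obtain ⟨w⟩ := h
      obtain ⟨e⟩ := hcopy (part w)
      exact hβ ⟨e.symm ⟨w, rfl⟩⟩
    have hW' : IsEmpty W' := by
      by_contra h
      rw [not_isEmpty_iff] at h
      obtain ⟨w⟩ := h
      obtain ⟨e⟩ := hcopy' (part' w)
      exact hβ ⟨e.symm ⟨w, rfl⟩⟩
    refine ⟨⟨Equiv.refl _, ?_⟩⟩
    intro a b
    simp only [Equiv.refl_apply]
    constructor
    · intro h
      obtain ⟨u, -, -, -, -⟩ := (hcross' a b h.ne).mp h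
      exact (hW'.false u).elim
    · intro h
      obtain ⟨u, -, -, -, -⟩ := (hcross a b h.ne).mp h
      exact (hW.false u).elim
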